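/- Let G be a finite group and H a finite nilpotent nontrivial group. If p is the smallest prime divisor of gcd(|G|,|H|) such that G has a normal subgroup of index p, then Λ_{G,H} = 1/p. -/

import Mathlib

/-- An affine homomorphism from `G` to `H` is a function of the form
`g ↦ h * φ₀ g` for a fixed `h : H` and a group homomorphism `φ₀ : G →* H`. -/
def IsAffineHom {G H : Type*} [Group G] [Group H] (φ : G → H) : Prop :=
  ∃ (h : H) (φ₀ : G →* H), ∀ g : G, φ g = h * φ₀ g

/-- The agreement of two functions `f g : G → H`: the fraction of inputs
on which they agree, `|Eq(f,g)| / |G|`. -/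
noncomputable def agr {G H : Type*} (f g : G → H) : ℝ :=
  (Nat.card {x : G // f x = g x} : ℝ) / (Nat.card G : ℝ)

/-- The maximum agreement `Λ_{G,H}`: the maximum of `agr φ ψ` over all pairs of
distinct affine homomorphisms `φ ψ : G → H`. -/
noncomputable def Lambda (G H : Type*) [Group G] [Group H] : ℝ :=
  sSup {r : ℝ | ∃ φ ψ : G → H,
    IsAffineHom φ ∧ IsAffineHom ψ ∧ φ ≠ ψ ∧ r = agr φ ψ}


/-- A finite commutative group has a subgroup of index `q` for every prime `q`
dividing its order. -/
theorem exists_index_prime_of_comm (R : Type*) [CommGroup R] [Finite R]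
    (q : ℕ) (hq : q.Prime) (hdvd : q ∣ Nat.card R) : ∃ B : Subgroup R, B.index = q := by
  haveI : Fact q.Prime := ⟨hq⟩
  set n : ℕ := (Nat.card R).factorization q with hn
  set m : ℕ := Nat.card R / q ^ n with hm
  have hcardpos : 0 < Nat.card R := Nat.card_pos
  have hqn_dvd : q ^ n ∣ Nat.card R := Nat.ordProj_dvd _ q
  have hmul : q ^ n * m = Nat.card R := Nat.mul_div_cancel' hqn_dvd
  have hqm : ¬ q ∣ m := by
    intro hqm'
    have : q ^ (n + 1) ∣ Nat.card R := by
      rw [← hmul, pow_succ]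
      exact mul_dvd_mul_left _ hqm'
    exact Nat.pow_succ_factorization_not_dvd hcardpos.ne' hq this
  -- the q-part via the power map
  let f : R →* R := powMonoidHom m
  have hP : IsPGroup q f.range := by
    rintro ⟨y, x, rfl⟩
    refine ⟨n, ?_⟩
    ext
    show (x ^ m) ^ q ^ n = 1
    rw [← pow_mul, mul_comm m, hmul]
    exact pow_card_eq_one'
  obtain ⟨k, hk⟩ := (IsPGroup.iff_card).mp hP
  -- k ≥ 1: otherwise every element satisfies x ^ m = 1, contradicting Cauchy
  have hk1 : 1 ≤ k := by
    by_contra hk0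
    push_neg at hk0
    interval_cases k
    rw [pow_zero] at hk
    have hsub : Subsingleton f.range := (Nat.card_eq_one_iff_unique.mp hk).1
    haveI := Fintype.ofFinite R
    obtain ⟨a, ha⟩ := exists_prime_orderOf_dvd_card (G := R) q
      (by rwa [Nat.card_eq_fintype_card] at hdvd)
    have : f a = 1 := by
      have := Subsingleton.elim (f.rangeRestrict a) 1
      exact congrArg Subtype.val this
    have : a ^ m = 1 := this
    have : orderOf a ∣ m := orderOf_dvd_of_pow_eq_one this
    rw [ha] at this
    exact hqm this
  obtain ⟨S, hS⟩ := Sylow.exists_subgroup_card_pow_prime (G := f.range) q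
    (n := k - 1) (by rw [hk]; exact pow_dvd_pow q (Nat.sub_le k 1))
  have hSindex : S.index = q := by
    have h1 : Nat.card S * S.index = Nat.card f.range := Subgroup.card_mul_index S
    rw [hS, hk] at h1
    have : q ^ (k - 1) * q = q ^ k := by
      rw [← pow_succ, Nat.sub_add_cancel hk1]
    have hq0 : (q : ℕ) ^ (k-1) ≠ 0 := pow_ne_zero _ hq.ne_zero
    exact Nat.eq_of_mul_eq_mul_left (Nat.pos_of_ne_zero hq0) (by rw [h1, ← this])
  refine ⟨(S.comap f.rangeRestrict), ?_⟩
  rw [Subgroup.index_comap_of_surjective _ f.rangeRestrict_surjective, hSindex]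

theorem exists_normal_prime_index_of_ne {G : Type*} [Group G] :
    ∀ (H : Type*) [Group H] [Group.IsNilpotent H], ∀ (_ : Finite H) (φ ψ : G →* H), φ ≠ ψ →
    ∃ (q : ℕ) (K : Subgroup G), q.Prime ∧ K.Normal ∧ K.index = q ∧
      q ∣ Nat.card H ∧ ∀ x : G, φ x = ψ x → x ∈ K := by
  intro H iH inH
  refine nilpotent_center_quotient_ind
    (P := fun H _ _ => ∀ (_ : Finite H) (φ ψ : G →* H), φ ≠ ψ →
      ∃ (q : ℕ) (K : Subgroup G), q.Prime ∧ K.Normal ∧ K.index = q ∧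
        q ∣ Nat.card H ∧ ∀ x : G, φ x = ψ x → x ∈ K) H
    (fun H _ _ _ φ ψ hne =>
      absurd (MonoidHom.ext fun x => Subsingleton.elim _ _) hne) ?_
  intro H _ _ ih hfin φ ψ hne
  by_cases hc : ∀ x : G, (φ x)⁻¹ * ψ x ∈ Subgroup.center H
  · -- the difference is a homomorphism into the center
    let δ : G →* Subgroup.center H :=
      { toFun := fun x => ⟨(φ x)⁻¹ * ψ x, hc x⟩
        map_one' := by ext; simp
        map_mul' := by
          intro x y
          ext
          show (φ (x * y))⁻¹ * ψ (x * y) = ((φ x)⁻¹ * ψ x) * ((φ y)⁻¹ * ψ y)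
          have h1 : (φ y)⁻¹ * ((φ x)⁻¹ * ψ x) = ((φ x)⁻¹ * ψ x) * (φ y)⁻¹ :=
            Subgroup.mem_center_iff.mp (hc x) (φ y)⁻¹
          calc (φ (x * y))⁻¹ * ψ (x * y)
              = ((φ y)⁻¹ * ((φ x)⁻¹ * ψ x)) * ψ y := by
                rw [map_mul, map_mul, mul_inv_rev]; group
            _ = (((φ x)⁻¹ * ψ x) * (φ y)⁻¹) * ψ y := by rw [h1]
            _ = ((φ x)⁻¹ * ψ x) * ((φ y)⁻¹ * ψ y) := by group }
    obtain ⟨x, hx⟩ := DFunLike.ne_iff.mp hne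
    have hδx : δ x ≠ 1 := by
      intro h
      apply hx
      have : (φ x)⁻¹ * ψ x = 1 := congrArg Subtype.val h
      rw [inv_mul_eq_one] at this
      exact this
    haveI : Nontrivial δ.range := ⟨⟨δ.rangeRestrict x, 1, by
      intro h
      exact hδx (congrArg Subtype.val h)⟩⟩
    set q : ℕ := (Nat.card δ.range).minFac with hqdef
    have hcard1 : Nat.card δ.range ≠ 1 :=
      (Finite.one_lt_card_iff_nontrivial.mpr inferInstance).ne'
    have hq : q.Prime := Nat.minFac_prime hcard1
    open scoped IsMulCommutative in
    obtain ⟨B, hB⟩ := exists_index_prime_of_comm δ.range q hq (Nat.minFac_dvd _)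
    refine ⟨q, B.comap δ.rangeRestrict, hq, ?_, ?_, ?_, ?_⟩
    · exact Subgroup.Normal.comap (by infer_instance) _
    · rw [Subgroup.index_comap_of_surjective _ δ.rangeRestrict_surjective, hB]
    · exact (Nat.minFac_dvd _).trans ((Subgroup.card_subgroup_dvd_card δ.range).trans
        (Subgroup.card_subgroup_dvd_card (Subgroup.center H)))
    · intro y hy
      have : δ.rangeRestrict y = 1 := by
        ext
        show (φ y)⁻¹ * ψ y = 1
        rw [hy, inv_mul_cancel]
      show δ.rangeRestrict y ∈ B
      rw [this]
      exact B.one_mem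
  · push_neg at hc
    obtain ⟨x₀, hx₀⟩ := hc
    let π := QuotientGroup.mk' (Subgroup.center H)
    have hne' : π.comp φ ≠ π.comp ψ := by
      intro h
      apply hx₀
      have h2 : π (φ x₀) = π (ψ x₀) := DFunLike.congr_fun h x₀
      exact (QuotientGroup.eq).mp h2
    obtain ⟨q, K, h1, h2, h3, h4, h5⟩ := ih inferInstance (π.comp φ) (π.comp ψ) hne'
    exact ⟨q, K, h1, h2, h3, h4.trans (Subgroup.card_quotient_dvd_card _),
      fun x hx => h5 x (by simp [MonoidHom.comp_apply, hx])⟩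

theorem nilpotent_codomain_lambda (G H : Type*) [Group G] [Group H]
    [Finite G] [Finite H] [Nontrivial H] [Group.IsNilpotent H]
    (p : ℕ) (hp : p.Prime) (hdvd : p ∣ Nat.gcd (Nat.card G) (Nat.card H))
    (hex : ∃ K : Subgroup G, K.Normal ∧ K.index = p)
    (hmin : ∀ q : ℕ, q.Prime → q ∣ Nat.gcd (Nat.card G) (Nat.card H) →
      (∃ K : Subgroup G, K.Normal ∧ K.index = q) → p ≤ q) :
    Lambda G H = 1 / (p : ℝ) := by
  obtain ⟨K, hKn, hKi⟩ := hex
  haveI : K.Normal := hKn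
  haveI : Fact p.Prime := ⟨hp⟩
  have hpH : p ∣ Nat.card H := hdvd.trans (Nat.gcd_dvd_right _ _)
  have hGpos : 0 < (Nat.card G : ℝ) := by exact_mod_cast Nat.card_pos
  -- the witness pair achieving agreement 1/p
  haveI := Fintype.ofFinite H
  obtain ⟨h, hh⟩ := exists_prime_orderOf_dvd_card (G := H) p (by rwa [← Nat.card_eq_fintype_card])
  have hcardQ : Nat.card (G ⧸ K) = p := by rw [← Subgroup.index_eq_card, hKi]
  have hcardZ : Nat.card (Subgroup.zpowers h) = p := by rw [Nat.card_zpowers, hh]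
  let e : (G ⧸ K) ≃* Subgroup.zpowers h := mulEquivOfPrimeCardEq hcardQ hcardZ
  let φ₀ : G →* H := (Subgroup.subtype _).comp (e.toMonoidHom.comp (QuotientGroup.mk' K))
  have hker : ∀ x : G, φ₀ x = 1 ↔ x ∈ K := by
    intro x
    show ((e (QuotientGroup.mk x) : Subgroup.zpowers h) : H) = 1 ↔ x ∈ K
    rw [OneMemClass.coe_eq_one, MulEquiv.map_eq_one_iff, QuotientGroup.eq_one_iff]
  have hKtop : K ≠ ⊤ := by
    intro hKtop
    rw [hKtop, Subgroup.index_top] at hKi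
    exact hp.one_lt.ne hKi
  obtain ⟨x, hx⟩ : ∃ x : G, x ∉ K := by
    by_contra hall
    push_neg at hall
    exact hKtop ((Subgroup.eq_top_iff' K).mpr hall)
  have hmem1p : (1 / (p : ℝ)) ∈ {r : ℝ | ∃ φ ψ : G → H,
      IsAffineHom φ ∧ IsAffineHom ψ ∧ φ ≠ ψ ∧ r = agr φ ψ} := by
    refine ⟨⇑φ₀, fun _ => 1, ⟨1, φ₀, fun g => (one_mul _).symm⟩,
      ⟨1, 1, fun g => by simp⟩, ?_, ?_⟩
    · intro heq
      have : φ₀ x = 1 := congrFun heq x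
      exact hx ((hker x).mp this)
    · have hcardeq : Nat.card {y : G // φ₀ y = (fun _ => (1:H)) y} = Nat.card K :=
        Nat.card_congr (Equiv.subtypeEquivRight fun y => hker y)
      have hc : Nat.card G = Nat.card K * p := by rw [← Subgroup.card_mul_index K, hKi]
      have hKpos : 0 < (Nat.card K : ℝ) := by exact_mod_cast Nat.card_pos
      have hppos : 0 < (p : ℝ) := by exact_mod_cast hp.pos
      rw [agr, hcardeq, hc]
      push_cast
      field_simp
  have hub : ∀ r ∈ {r : ℝ | ∃ φ ψ : G → H,
      IsAffineHom φ ∧ IsAffineHom ψ ∧ φ ≠ ψ ∧ r = agr φ ψ}, r ≤ 1 / (p : ℝ) := by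
    rintro r ⟨φ, ψ, ⟨a, φ₁, hφ⟩, ⟨b, ψ₁, hψ⟩, hne, rfl⟩
    have hppos : 0 < (p : ℝ) := by exact_mod_cast hp.pos
    rw [agr]
    rcases isEmpty_or_nonempty {x : G // φ x = ψ x} with hE | hE
    · rw [Nat.card_of_isEmpty]
      rw [Nat.cast_zero, zero_div]
      positivity
    obtain ⟨⟨x₀, hx₀⟩⟩ := hE
    have key₀ : a * φ₁ x₀ = b * ψ₁ x₀ := (hφ x₀).symm.trans (hx₀.trans (hψ x₀))
    have hne1 : φ₁ ≠ ψ₁ := by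
      intro heq
      apply hne
      subst heq
      have hab : a = b := by
        have := key₀
        exact mul_right_cancel this
      funext g
      rw [hφ g, hψ g, hab]
    obtain ⟨q, Kq, hq, hKqn, hKqi, hqH, hmem⟩ :=
      exists_normal_prime_index_of_ne H inferInstance φ₁ ψ₁ hne1
    have hqG : q ∣ Nat.card G := hKqi ▸ Subgroup.index_dvd_card (H := Kq)
    have hpq : p ≤ q := hmin q hq (Nat.dvd_gcd hqG hqH) ⟨Kq, hKqn, hKqi⟩
    -- translate the equalizer
    have hcardeq : Nat.card {x : G // φ x = ψ x} = Nat.card {y : G // φ₁ y = ψ₁ y} := by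
      refine Nat.card_congr ⟨fun z => ⟨x₀⁻¹ * z.1, ?_⟩, fun y => ⟨x₀ * y.1, ?_⟩, ?_, ?_⟩
      · obtain ⟨z, hz⟩ := z
        have keyz : a * φ₁ z = b * ψ₁ z := (hφ z).symm.trans (hz.trans (hψ z))
        have e1 : φ₁ x₀ = a⁻¹ * (b * ψ₁ x₀) := by rw [← key₀]; group
        have e2 : φ₁ z = a⁻¹ * (b * ψ₁ z) := by rw [← keyz]; group
        show φ₁ (x₀⁻¹ * z) = ψ₁ (x₀⁻¹ * z)
        rw [map_mul, map_mul, map_inv, map_inv, e1, e2]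
        group
      · obtain ⟨y, hy⟩ := y
        show φ (x₀ * y) = ψ (x₀ * y)
        rw [hφ, hψ, map_mul, map_mul, ← mul_assoc, ← mul_assoc, key₀, hy]
      · rintro ⟨z, hz⟩
        simp
      · rintro ⟨y, hy⟩
        simp
    have hle : Nat.card {y : G // φ₁ y = ψ₁ y} ≤ Nat.card Kq :=
      Nat.card_le_card_of_injective (fun y => (⟨y.1, hmem y.1 y.2⟩ : Kq))
        (by intro y z hyz
            apply Subtype.ext
            have h3 := congrArg (Subtype.val : Kq → G) hyz
            simpa using h3)
    have hc : Nat.card G = Nat.card Kq * q := by rw [← Subgroup.card_mul_index Kq, hKqi]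
    have hKpos : 0 < (Nat.card Kq : ℝ) := by exact_mod_cast Nat.card_pos
    have hqpos : 0 < (q : ℝ) := by exact_mod_cast hq.pos
    calc (Nat.card {x : G // φ x = ψ x} : ℝ) / (Nat.card G : ℝ)
        ≤ (Nat.card Kq : ℝ) / (Nat.card G : ℝ) := by
          gcongr
          exact_mod_cast hcardeq ▸ hle
      _ = 1 / (q : ℝ) := by
          rw [hc]; push_cast; field_simp
      _ ≤ 1 / (p : ℝ) := by
          apply one_div_le_one_div_of_le hppos
          exact_mod_cast hpq
  apply le_antisymm
  · exact csSup_le ⟨_, hmem1p⟩ hub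
  · exact le_csSup ⟨1 / (p : ℝ), hub⟩ hmem1p
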